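/- The roots α(d) and β(d) of adx²+(bd-1)x+d=0 are respectively strictly increasing and strictly decreasing functions of d on (0, 1/(b+2√a)), and both tend to 1/√a as d→1/(b+2√a)⁻. -/

import Mathlib

/-- The roots `α(d)` and `β(d)` of `a d x² + (b d - 1) x + d = 0` are respectively
strictly increasing and strictly decreasing on `(0, 1/(b+2√a))`, and both tend to
`1/√a` as `d → (1/(b+2√a))⁻`. -/
theorem stmt_4 (a b : ℝ) (ha : 0 < a) (hb : -2 * Real.sqrt a < b)
    (α β : ℝ → ℝ)
    (hα : ∀ d, α d = (1 - b * d - Real.sqrt ((b * d - 1) ^ 2 - 4 * a * d ^ 2)) / (2 * a * d))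
    (hβ : ∀ d, β d = (1 - b * d + Real.sqrt ((b * d - 1) ^ 2 - 4 * a * d ^ 2)) / (2 * a * d)) :
    StrictMonoOn α (Set.Ioo 0 (1 / (b + 2 * Real.sqrt a))) ∧
    StrictAntiOn β (Set.Ioo 0 (1 / (b + 2 * Real.sqrt a))) ∧
    Filter.Tendsto α (nhdsWithin (1 / (b + 2 * Real.sqrt a))
      (Set.Iio (1 / (b + 2 * Real.sqrt a)))) (nhds (1 / Real.sqrt a)) ∧
    Filter.Tendsto β (nhdsWithin (1 / (b + 2 * Real.sqrt a))
      (Set.Iio (1 / (b + 2 * Real.sqrt a)))) (nhds (1 / Real.sqrt a)) := by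
  set s := Real.sqrt a with hsdef
  have hs : 0 < s := Real.sqrt_pos.mpr ha
  have ha2 : s ^ 2 = a := Real.sq_sqrt ha.le
  have hc : 0 < b + 2 * s := by linarith
  set D := 1 / (b + 2 * s) with hDdef
  have hD0 : 0 < D := by positivity
  have hDinv : 1 / D = b + 2 * s := one_div_one_div _
  -- key representation on the interval
  have key : ∀ d ∈ Set.Ioo (0:ℝ) D,
      2 * s < 1 / d - b ∧
      α d = 2 / ((1 / d - b) + Real.sqrt ((1 / d - b) ^ 2 - 4 * a)) ∧
      β d = ((1 / d - b) + Real.sqrt ((1 / d - b) ^ 2 - 4 * a)) / (2 * a) := by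
    rintro d ⟨hd0, hdD⟩
    set u := 1 / d - b with hu_def
    have hu : 2 * s < u := by
      have h1 : 1 / D < 1 / d := one_div_lt_one_div_of_lt hd0 hdD
      rw [hDinv] at h1
      simp only [hu_def]; linarith
    have hu0 : 0 < u := by linarith
    have hudisc : 0 ≤ u ^ 2 - 4 * a := by nlinarith
    set w := Real.sqrt (u ^ 2 - 4 * a) with hw_def
    have hw0 : 0 ≤ w := Real.sqrt_nonneg _
    have hw2 : w ^ 2 = u ^ 2 - 4 * a := Real.sq_sqrt hudisc
    have hΔ : (b * d - 1) ^ 2 - 4 * a * d ^ 2 = d ^ 2 * (u ^ 2 - 4 * a) := by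
      simp only [hu_def]; field_simp; ring
    have hsqrtΔ : Real.sqrt ((b * d - 1) ^ 2 - 4 * a * d ^ 2) = d * w := by
      rw [hΔ, Real.sqrt_mul (sq_nonneg d), Real.sqrt_sq hd0.le, hw_def]
    have h1bd : 1 - b * d = d * u := by
      simp only [hu_def]; field_simp
    have huw : 0 < u + w := by linarith
    refine ⟨hu, ?_, ?_⟩
    · rw [hα d, hsqrtΔ, h1bd]
      rw [div_eq_div_iff (by positivity) huw.ne']
      nlinarith
    · rw [hβ d, hsqrtΔ, h1bd]
      rw [div_eq_div_iff (by positivity : (0:ℝ) < 2*a*d).ne' (by positivity : (0:ℝ) < 2*a).ne']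
      ring
  -- monotonicity helper: denominators compare
  have denom_lt : ∀ x ∈ Set.Ioo (0:ℝ) D, ∀ y ∈ Set.Ioo (0:ℝ) D, x < y →
      (1 / y - b) + Real.sqrt ((1 / y - b) ^ 2 - 4 * a) <
      (1 / x - b) + Real.sqrt ((1 / x - b) ^ 2 - 4 * a) := by
    rintro x hx y hy hxy
    have hux := (key x hx).1
    have huy := (key y hy).1
    have huyx : 1 / y - b < 1 / x - b := by
      have := one_div_lt_one_div_of_lt hx.1 hxy
      linarith
    have hsq : (1 / y - b) ^ 2 - 4 * a ≤ (1 / x - b) ^ 2 - 4 * a := by nlinarith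
    have := Real.sqrt_le_sqrt hsq
    linarith
  have denom_pos : ∀ x ∈ Set.Ioo (0:ℝ) D,
      0 < (1 / x - b) + Real.sqrt ((1 / x - b) ^ 2 - 4 * a) := by
    rintro x hx
    have := (key x hx).1
    have := Real.sqrt_nonneg ((1 / x - b) ^ 2 - 4 * a)
    linarith
  refine ⟨?_, ?_, ?_, ?_⟩
  · -- strict mono of α
    intro x hx y hy hxy
    rw [(key x hx).2.1, (key y hy).2.1]
    exact div_lt_div_of_pos_left two_pos (denom_pos y hy) (denom_lt x hx y hy hxy)
  · -- strict anti of β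
    intro x hx y hy hxy
    rw [(key x hx).2.2, (key y hy).2.2]
    exact div_lt_div_of_pos_right (denom_lt x hx y hy hxy) (by positivity) |>.trans_le le_rfl
  all_goals {
    have hu_tendsto : Filter.Tendsto (fun d : ℝ => 1 / d - b)
        (nhdsWithin D (Set.Iio D)) (nhds (2 * s)) := by
      have hcont : ContinuousAt (fun d : ℝ => 1 / d - b) D :=
        ((continuousAt_const.div continuousAt_id hD0.ne')).sub continuousAt_const
      have := hcont.tendsto.mono_left (nhdsWithin_le_nhds : nhdsWithin D (Set.Iio D) ≤ nhds D)
      simpa [hDinv] using this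
    have hw_tendsto : Filter.Tendsto (fun d : ℝ => Real.sqrt ((1 / d - b) ^ 2 - 4 * a))
        (nhdsWithin D (Set.Iio D)) (nhds 0) := by
      have h1 : Filter.Tendsto (fun d : ℝ => (1 / d - b) ^ 2 - 4 * a)
          (nhdsWithin D (Set.Iio D)) (nhds ((2 * s) ^ 2 - 4 * a)) :=
        (hu_tendsto.pow 2).sub tendsto_const_nhds
      have h2 : (2 * s) ^ 2 - 4 * a = 0 := by nlinarith
      rw [h2] at h1
      simpa using h1.sqrt
    have hev : ∀ᶠ d in nhdsWithin D (Set.Iio D), d ∈ Set.Ioo (0:ℝ) D := by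
      have h1 : ∀ᶠ d in nhdsWithin D (Set.Iio D), d < D := eventually_mem_nhdsWithin
      have h2 : ∀ᶠ d in nhdsWithin D (Set.Iio D), 0 < d :=
        (eventually_gt_nhds hD0).filter_mono nhdsWithin_le_nhds
      filter_upwards [h1, h2] with d hd1 hd2 using ⟨hd2, hd1⟩
    first
    | · -- α limit
        have hval : (2 : ℝ) / (2 * s + 0) = 1 / s := by
          rw [add_zero]; field_simp
        have hmain : Filter.Tendsto (fun d : ℝ =>
            2 / ((1 / d - b) + Real.sqrt ((1 / d - b) ^ 2 - 4 * a)))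
            (nhdsWithin D (Set.Iio D)) (nhds (1 / s)) := by
          rw [← hval]
          exact tendsto_const_nhds.div (hu_tendsto.add hw_tendsto) (by positivity)
        exact hmain.congr' (hev.mono fun d hd => ((key d hd).2.1).symm)
    | · -- β limit
        have hval : (2 * s + 0) / (2 * a) = 1 / s := by
          rw [add_zero, ← ha2]; field_simp
        have hmain : Filter.Tendsto (fun d : ℝ =>
            ((1 / d - b) + Real.sqrt ((1 / d - b) ^ 2 - 4 * a)) / (2 * a))
            (nhdsWithin D (Set.Iio D)) (nhds (1 / s)) := by
          rw [← hval]
          exact (hu_tendsto.add hw_tendsto).div tendsto_const_nhds (by positivity)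
        exact hmain.congr' (hev.mono fun d hd => ((key d hd).2.2).symm)
  }
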